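/- Let n ≥ 1, let ε_{ji} (1 ≤ i < j ≤ n) be integers, set f_j = ∑_{i=1}^{j−1} ε_{ji}·x_i, and let B = ℤ[x₁,…,x_n]/⟨x_j(x_j − f_j) : 1 ≤ j ≤ n⟩. For α = ∑_{j=1}^n a_j·x_j with integer coefficients a_j, one has α² = 0 in B if and only if a_j²·ε_{ji} = −2·a_j·a_i for all 1 ≤ i < j ≤ n. -/

import Mathlib

open MvPolynomial

/-- `f j = ∑_{i < j} ε j i • x i`, the twisting class of the `j`-th stage. -/
noncomputable def bottF (n : ℕ) (ε : Fin n → Fin n → ℤ) (j : Fin n) :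
    MvPolynomial (Fin n) ℤ :=
  ∑ i : Fin n, if i < j then C (ε j i) * X i else 0

/-- The defining ideal `⟨x_j (x_j - f_j) : j⟩` of the Bott ring. -/
noncomputable def bottIdeal (n : ℕ) (ε : Fin n → Fin n → ℤ) :
    Ideal (MvPolynomial (Fin n) ℤ) :=
  Ideal.span (Set.range fun j : Fin n => X j * (X j - bottF n ε j))


namespace BottAux

variable {n : ℕ}

lemma mem_supp_add_right {i j : Fin n} (hij : i ≠ j) :
    j ∈ (Finsupp.single i 1 + Finsupp.single j 1).support := by
  simp [Finsupp.mem_support_iff, Finsupp.single_apply, hij]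

lemma sub_single_right (i j : Fin n) :
    (Finsupp.single i 1 + Finsupp.single j 1) - Finsupp.single j 1 = Finsupp.single i (1:ℕ) :=
  add_tsub_cancel_right _ _

lemma not_mem_supp_single {i j : Fin n} (hij : i ≠ j) :
    j ∉ (Finsupp.single i (1:ℕ)).support := by
  simp [Finsupp.mem_support_iff, Finsupp.single_apply, hij, Ne.symm hij]

lemma single_two (j : Fin n) :
    Finsupp.single j (2:ℕ) = Finsupp.single j 1 + Finsupp.single j 1 := by
  rw [← Finsupp.single_add]

lemma coeff_qXX {i j k : Fin n} (hij : i ≠ j) (q : MvPolynomial (Fin n) ℤ) :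
    coeff (Finsupp.single i 1 + Finsupp.single j 1) (q * X k * X k) = 0 := by
  by_cases hk : k ∈ (Finsupp.single i 1 + Finsupp.single j 1).support
  · rw [coeff_mul_X', if_pos hk]
    have hk' : k = i ∨ k = j := by
      rcases Finsupp.mem_support_iff.1 hk with h
      by_contra hc
      push_neg at hc
      simp [Finsupp.add_apply, Finsupp.single_apply, Ne.symm hc.1, Ne.symm hc.2] at h
    rcases hk' with rfl | rfl
    · rw [add_comm (Finsupp.single k 1), sub_single_right, coeff_mul_X',
        if_neg (not_mem_supp_single (Ne.symm hij))]
    · rw [sub_single_right, coeff_mul_X', if_neg (not_mem_supp_single hij)]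
  · rw [coeff_mul_X', if_neg hk]

lemma coeff_qXX_two {j k : Fin n} (q : MvPolynomial (Fin n) ℤ) :
    coeff (Finsupp.single j 2) (q * X k * X k) = if k = j then coeff 0 q else 0 := by
  by_cases hk : k = j
  · subst hk
    rw [if_pos rfl, coeff_mul_X', if_pos (by simp), single_two, add_tsub_cancel_right,
      coeff_mul_X', if_pos (by simp)]
    simp
  · rw [if_neg hk, coeff_mul_X', if_neg (by simp [Finsupp.mem_support_iff, Finsupp.single_apply, Ne.symm hk, hk])]

lemma coeff_qXlXk_two {j l k : Fin n} (hlk : l ≠ k) (q : MvPolynomial (Fin n) ℤ) :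
    coeff (Finsupp.single j 2) (q * X l * X k) = 0 := by
  by_cases hk : k = j
  · subst hk
    rw [coeff_mul_X', if_pos (by simp), single_two, add_tsub_cancel_right, coeff_mul_X',
      if_neg (by simp [Finsupp.mem_support_iff, Finsupp.single_apply, hlk, hlk.symm])]
  · rw [coeff_mul_X', if_neg (by simp [Finsupp.mem_support_iff, Finsupp.single_apply, Ne.symm hk, hk])]

lemma coeff_qXlXk_one {i j l k : Fin n} (hij : i ≠ j) (hli : l ≠ i) (hlj : l ≠ j)
    (q : MvPolynomial (Fin n) ℤ) :
    coeff (Finsupp.single i 1 + Finsupp.single j 1) (q * X l * X k) = 0 := by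
  by_cases hk : k ∈ (Finsupp.single i 1 + Finsupp.single j 1).support
  · rw [coeff_mul_X', if_pos hk]
    have hk' : k = i ∨ k = j := by
      rcases Finsupp.mem_support_iff.1 hk with h
      by_contra hc
      push_neg at hc
      simp [Finsupp.add_apply, Finsupp.single_apply, Ne.symm hc.1, Ne.symm hc.2] at h
    rcases hk' with rfl | rfl
    · rw [add_comm (Finsupp.single k 1), sub_single_right, coeff_mul_X',
        if_neg (by simp [Finsupp.mem_support_iff, Finsupp.single_apply, hlj, hlj.symm])]
    · rw [sub_single_right, coeff_mul_X',
        if_neg (by simp [Finsupp.mem_support_iff, Finsupp.single_apply, hli, hli.symm])]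
  · rw [coeff_mul_X', if_neg hk]

lemma coeff_qXiXj_one {i j : Fin n} (hij : i ≠ j) (q : MvPolynomial (Fin n) ℤ) :
    coeff (Finsupp.single i 1 + Finsupp.single j 1) (q * X i * X j) = coeff 0 q := by
  rw [coeff_mul_X', if_pos (mem_supp_add_right hij), sub_single_right, coeff_mul_X',
    if_pos (by simp)]
  simp

end BottAux

namespace BottAux
variable {n : ℕ}

lemma coeff_one_notmem {i j k : Fin n} (hki : k ≠ i) (hkj : k ≠ j)
    (p : MvPolynomial (Fin n) ℤ) :
    coeff (Finsupp.single i 1 + Finsupp.single j 1) (p * X k) = 0 := by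
  rw [coeff_mul_X', if_neg]
  simp [Finsupp.mem_support_iff, Finsupp.single_apply, hki.symm, hkj.symm]

lemma expand_gen (ε : Fin n → Fin n → ℤ) (k : Fin n) (q : MvPolynomial (Fin n) ℤ) :
    q * (X k * (X k - bottF n ε k)) =
      q * X k * X k - ∑ l : Fin n, if l < k then C (ε k l) * (q * X l * X k) else 0 := by
  simp only [bottF, mul_sub, Finset.mul_sum, mul_ite, mul_zero]
  congr 1
  · ring
  · exact Finset.sum_congr rfl fun l _ => by split_ifs <;> ring

lemma gen_coeff {i j : Fin n} (hij : i < j) (ε : Fin n → Fin n → ℤ) (k : Fin n)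
    (q : MvPolynomial (Fin n) ℤ) :
    coeff (Finsupp.single i 1 + Finsupp.single j 1) (q * (X k * (X k - bottF n ε k)))
      + ε j i * coeff (Finsupp.single j 2) (q * (X k * (X k - bottF n ε k))) = 0 := by
  have hij' : i ≠ j := hij.ne
  rw [expand_gen, coeff_sub, coeff_sub, coeff_sum, coeff_sum, coeff_qXX hij',
    coeff_qXX_two]
  simp only [apply_ite (coeff (Finsupp.single i 1 + Finsupp.single j 1)),
    apply_ite (coeff (Finsupp.single j 2)), coeff_zero, coeff_C_mul]
  by_cases hk : k = j
  · subst hk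
    have h1 : ∀ l : Fin n, (if l < k then ε k l *
        coeff (Finsupp.single i 1 + Finsupp.single k 1) (q * X l * X k) else 0)
        = if l = i then ε k i * coeff 0 q else 0 := by
      intro l
      by_cases hl : l = i
      · subst hl
        rw [if_pos rfl, if_pos hij, coeff_qXiXj_one hij']
      · rw [if_neg hl]
        split_ifs with h
        · rw [coeff_qXlXk_one hij' hl (ne_of_lt h), mul_zero]
        · rfl
    have h2 : ∀ l : Fin n, (if l < k then ε k l *
        coeff (Finsupp.single k 2) (q * X l * X k) else 0) = 0 := by
      intro l
      split_ifs with h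
      · rw [coeff_qXlXk_two (ne_of_lt h), mul_zero]
      · rfl
    simp only [h1, h2, Finset.sum_const_zero, Finset.sum_ite_eq', Finset.mem_univ, if_pos, if_true]
    ring
  · have h1 : ∀ l : Fin n, (if l < k then ε k l *
        coeff (Finsupp.single i 1 + Finsupp.single j 1) (q * X l * X k) else 0) = 0 := by
      intro l
      split_ifs with h
      · by_cases hki : k = i
        · subst hki
          rw [coeff_qXlXk_one hij' (ne_of_lt h) (ne_of_lt (h.trans hij)), mul_zero]
        · rw [coeff_one_notmem hki hk, mul_zero]
      · rfl
    have h2 : ∀ l : Fin n, (if l < k then ε k l *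
        coeff (Finsupp.single j 2) (q * X l * X k) else 0) = 0 := by
      intro l
      split_ifs with h
      · rw [coeff_qXlXk_two (ne_of_lt h), mul_zero]
      · rfl
    simp only [h1, h2, Finset.sum_const_zero, if_neg hk]
    ring

end BottAux
namespace BottAux
variable {n : ℕ}

lemma key {i j : Fin n} (hij : i < j) (ε : Fin n → Fin n → ℤ) {p : MvPolynomial (Fin n) ℤ}
    (hp : p ∈ bottIdeal n ε) :
    coeff (Finsupp.single i 1 + Finsupp.single j 1) p
      + ε j i * coeff (Finsupp.single j 2) p = 0 := by
  rw [bottIdeal] at hp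
  obtain ⟨c, hc⟩ := (Submodule.mem_span_range_iff_exists_fun _).1 hp
  rw [← hc]
  simp only [smul_eq_mul, coeff_sum]
  rw [Finset.mul_sum, ← Finset.sum_add_distrib]
  exact Finset.sum_eq_zero fun k _ => gen_coeff hij ε k (c k)

lemma pair_eq {i j l m : Fin n} (hij : i ≠ j) :
    Finsupp.single l 1 + Finsupp.single m 1 = Finsupp.single i 1 + Finsupp.single j 1 ↔
      (l = i ∧ m = j) ∨ (l = j ∧ m = i) := by
  constructor
  · intro h
    by_cases hli : l = i
    · subst hli
      left
      refine ⟨rfl, ?_⟩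
      have := add_left_cancel h
      rcases (Finsupp.single_eq_single_iff _ _ _ _).1 this with ⟨h1, _⟩ | ⟨h1, _⟩
      · exact h1
      · exact absurd h1 one_ne_zero
    · right
      have hm : m = i := by
        have h' := DFunLike.congr_fun h i
        by_contra hmi
        simp [Finsupp.single_apply, hli, hmi, Ne.symm hij] at h'
      subst hm
      refine ⟨?_, rfl⟩
      rw [add_comm] at h
      have := add_left_cancel h
      rcases (Finsupp.single_eq_single_iff _ _ _ _).1 this with ⟨h1, _⟩ | ⟨h1, _⟩
      · exact h1
      · exact absurd h1 one_ne_zero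
  · rintro (⟨rfl, rfl⟩ | ⟨rfl, rfl⟩)
    · rfl
    · exact add_comm _ _

lemma pair_eq_two {j l m : Fin n} :
    Finsupp.single l 1 + Finsupp.single m 1 = Finsupp.single j (2:ℕ) ↔ l = j ∧ m = j := by
  constructor
  · intro h
    have hl : l = j := by
      by_contra hl
      have h' := DFunLike.congr_fun h l
      simp [Finsupp.single_apply, Ne.symm hl] at h'
    have hm : m = j := by
      by_contra hm
      have h' := DFunLike.congr_fun h m
      simp [Finsupp.single_apply, Ne.symm hm] at h'
    exact ⟨hl, hm⟩
  · rintro ⟨rfl, rfl⟩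
    rw [← Finsupp.single_add]

lemma sq_expand (a : Fin n → ℤ) :
    (∑ j : Fin n, C (a j) * X j) ^ 2
      = ∑ l : Fin n, ∑ m : Fin n, C (a l * a m) * (X l * X m) := by
  rw [sq, Finset.sum_mul_sum]
  exact Finset.sum_congr rfl fun l _ => Finset.sum_congr rfl fun m _ => by
    rw [C_mul]; ring

lemma coeff_XX (l m : Fin n) (μ : Fin n →₀ ℕ) :
    coeff μ (X l * X m : MvPolynomial (Fin n) ℤ)
      = if Finsupp.single l 1 + Finsupp.single m 1 = μ then 1 else 0 := by
  rw [X, X, monomial_mul, coeff_monomial, one_mul]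

lemma coeff_sq_one {i j : Fin n} (hij : i ≠ j) (a : Fin n → ℤ) :
    coeff (Finsupp.single i 1 + Finsupp.single j 1) ((∑ j : Fin n, C (a j) * X j) ^ 2)
      = a i * a j + a j * a i := by
  rw [sq_expand]
  simp only [coeff_sum, coeff_C_mul, coeff_XX]
  have step : ∀ l m : Fin n,
      a l * a m * (if Finsupp.single l 1 + Finsupp.single m 1
          = Finsupp.single i 1 + Finsupp.single j 1 then (1:ℤ) else 0)
      = (if m = j then (if l = i then a l * a m else 0) else 0)
        + (if m = i then (if l = j then a l * a m else 0) else 0) := by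
    intro l m
    rw [if_congr (pair_eq hij) rfl rfl]
    by_cases h1 : l = i ∧ m = j
    · obtain ⟨rfl, rfl⟩ := h1
      simp [hij, Ne.symm hij]
    · by_cases h2 : l = j ∧ m = i
      · obtain ⟨rfl, rfl⟩ := h2
        simp [hij, Ne.symm hij]
      · rw [if_neg (by tauto)]
        have e1 : (if m = j then (if l = i then a l * a m else 0) else 0) = (0:ℤ) := by
          split_ifs <;> tauto
        have e2 : (if m = i then (if l = j then a l * a m else 0) else 0) = (0:ℤ) := by
          split_ifs <;> tauto
        rw [e1, e2, mul_zero, add_zero]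
  simp only [step, Finset.sum_add_distrib, Finset.sum_ite_eq', Finset.mem_univ, if_true]

lemma coeff_sq_two (j : Fin n) (a : Fin n → ℤ) :
    coeff (Finsupp.single j 2) ((∑ j : Fin n, C (a j) * X j) ^ 2) = a j * a j := by
  rw [sq_expand]
  simp only [coeff_sum, coeff_C_mul, coeff_XX]
  have step : ∀ l m : Fin n,
      a l * a m * (if Finsupp.single l 1 + Finsupp.single m 1
          = Finsupp.single j (2:ℕ) then (1:ℤ) else 0)
      = (if m = j then (if l = j then a l * a m else 0) else 0) := by
    intro l m
    rw [if_congr pair_eq_two rfl rfl]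
    by_cases h1 : l = j ∧ m = j
    · obtain ⟨rfl, rfl⟩ := h1
      simp
    · rw [if_neg h1]
      have e1 : (if m = j then (if l = j then a l * a m else 0) else 0) = (0:ℤ) := by
        split_ifs <;> tauto
      rw [e1, mul_zero]
  simp only [step, Finset.sum_ite_eq', Finset.mem_univ, if_true]

lemma hid (ε : Fin n → Fin n → ℤ) (a : Fin n → ℤ)
    (h : ∀ i j : Fin n, i < j → a j ^ 2 * ε j i = -2 * (a j * a i)) :
    (∑ j : Fin n, C (a j) * X j) ^ 2
      = ∑ j : Fin n, C (a j ^ 2) * (X j * (X j - bottF n ε j)) := by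
  have hR : ∀ j : Fin n, C (a j ^ 2) * (X j * (X j - bottF n ε j))
      = C (a j * a j) * (X j * X j)
        + ((∑ l : Fin n, if l < j then C (a j * a l) * (X l * X j) else 0)
          + ∑ l : Fin n, if l < j then C (a l * a j) * (X l * X j) else 0) := by
    intro j
    rw [expand_gen]
    have step : ∀ l : Fin n,
        (if l < j then C (ε j l) * (C (a j ^ 2) * X l * X j) else 0)
        = -((if l < j then C (a j * a l) * (X l * X j) else 0)
            + (if l < j then C (a l * a j) * (X l * X j) else 0)) := by
      intro l
      split_ifs with hl
      · have e1 : C (ε j l) * (C (a j ^ 2) * X l * X j)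
            = C (a j ^ 2 * ε j l) * (X l * X j) := by rw [C_mul]; ring
        rw [e1, h l j hl,
          show (-2 * (a j * a l) : ℤ) = -(a j * a l + a l * a j) by ring,
          map_neg, map_add]
        ring
      · simp
    rw [Finset.sum_congr rfl fun l _ => step l, Finset.sum_neg_distrib, sub_neg_eq_add,
      Finset.sum_add_distrib, show (a j : ℤ) ^ 2 = a j * a j from sq (a j)]
    ring
  have split : ∀ l m : Fin n, C (a l * a m) * (X l * X m : MvPolynomial (Fin n) ℤ)
      = (if m < l then C (a l * a m) * (X l * X m) else 0)
        + (if l = m then C (a l * a m) * (X l * X m) else 0)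
        + (if l < m then C (a l * a m) * (X l * X m) else 0) := by
    intro l m
    rcases lt_trichotomy l m with hc | hc | hc
    · rw [if_neg (asymm hc), if_neg hc.ne, if_pos hc]; ring
    · subst hc; simp
    · rw [if_pos hc, if_neg (ne_of_gt hc), if_neg (asymm hc)]; ring
  rw [sq_expand]
  simp only [Finset.sum_congr rfl fun j (_ : j ∈ Finset.univ) =>
    Finset.sum_congr rfl fun m (_ : m ∈ Finset.univ) => split j m]
  simp only [Finset.sum_add_distrib]
  have hB : (∑ l : Fin n, ∑ m : Fin n,
      if l = m then C (a l * a m) * (X l * X m : MvPolynomial (Fin n) ℤ) else 0)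
      = ∑ j : Fin n, C (a j * a j) * (X j * X j) := by
    refine Finset.sum_congr rfl fun l _ => ?_
    rw [Finset.sum_ite_eq, if_pos (Finset.mem_univ l)]
  have hA : (∑ l : Fin n, ∑ m : Fin n,
      if m < l then C (a l * a m) * (X l * X m : MvPolynomial (Fin n) ℤ) else 0)
      = ∑ j : Fin n, ∑ l : Fin n, if l < j then C (a j * a l) * (X l * X j) else 0 := by
    refine Finset.sum_congr rfl fun j _ => Finset.sum_congr rfl fun l _ => ?_
    split_ifs
    · ring
    · rfl
  have hC : (∑ l : Fin n, ∑ m : Fin n,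
      if l < m then C (a l * a m) * (X l * X m : MvPolynomial (Fin n) ℤ) else 0)
      = ∑ j : Fin n, ∑ l : Fin n, if l < j then C (a l * a j) * (X l * X j) else 0 := by
    rw [Finset.sum_comm]
  rw [hA, hB, hC, Finset.sum_congr rfl fun j (_ : j ∈ Finset.univ) => hR j,
    Finset.sum_add_distrib, Finset.sum_add_distrib]
  abel

end BottAux

open BottAux in
/-- In the Bott ring `ℤ[x₁,…,x_n]/⟨x_j(x_j - f_j)⟩`, the element `α = ∑ a_j x_j` squares to
zero iff `a_j ^ 2 * ε j i = -2 * a_j * a_i` for all `i < j`. -/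
theorem stmt3 (n : ℕ) (hn : 1 ≤ n) (ε : Fin n → Fin n → ℤ) (a : Fin n → ℤ) :
    (Ideal.Quotient.mk (bottIdeal n ε) (∑ j : Fin n, C (a j) * X j)) ^ 2 = 0 ↔
      ∀ i j : Fin n, i < j → (a j) ^ 2 * ε j i = -2 * (a j * a i) := by
  rw [← map_pow, Ideal.Quotient.eq_zero_iff_mem]
  constructor
  · intro hmem i j hij
    have hk := key hij ε hmem
    rw [coeff_sq_one hij.ne, coeff_sq_two] at hk
    linear_combination hk
  · intro h
    rw [hid ε a h]
    exact Ideal.sum_mem _ fun j _ =>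
      Ideal.mul_mem_left _ _ (Ideal.subset_span ⟨j, rfl⟩)
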